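/- There is no nonzero polynomial P ∈ ℝ[X,Y] such that P(d, arccos(d) − d·√(1 − d²)) = 0 for all d ∈ (-1,1). Equivalently, the area of the circular segment cut from the unit disk by the line {x₁ = d} is not an algebraic function of d (Newton's Lemma XXVIII for the disk). -/

import Mathlib

open MvPolynomial

private lemma analyticAt_rcos (x : ℝ) : AnalyticAt ℝ Real.cos x := by
  have h : AnalyticAt ℝ (fun t : ℝ => (Complex.cos (Complex.ofRealCLM t)).re) x :=
    (Complex.reCLM.analyticAt _).comp
      (((Complex.differentiable_cos.analyticAt _).restrictScalars).comp
        (Complex.ofRealCLM.analyticAt x))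
  simpa [Complex.cos_ofReal_re] using h

private lemma analyticAt_rsin (x : ℝ) : AnalyticAt ℝ Real.sin x := by
  have h : AnalyticAt ℝ (fun t : ℝ => (Complex.sin (Complex.ofRealCLM t)).re) x :=
    (Complex.reCLM.analyticAt _).comp
      (((Complex.differentiable_sin.analyticAt _).restrictScalars).comp
        (Complex.ofRealCLM.analyticAt x))
  simpa [Complex.sin_ofReal_re] using h

private lemma analytic_aux (Q : MvPolynomial (Fin 2) ℝ) :
    AnalyticOnNhd ℝ
      (fun θ : ℝ => MvPolynomial.eval ![Real.cos θ, θ - Real.cos θ * Real.sin θ] Q)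
      Set.univ := by
  induction Q using MvPolynomial.induction_on with
  | C a => simpa using (analyticOnNhd_const : AnalyticOnNhd ℝ (fun _ : ℝ => a) Set.univ)
  | add p q hp hq => simpa [map_add, Pi.add_def] using hp.add hq
  | mul_X p i hp =>
    simp only [map_mul, MvPolynomial.eval_X]
    apply hp.mul
    fin_cases i
    · intro x _
      simpa using analyticAt_rcos x
    · intro x _
      simp only [Matrix.cons_val_one, Matrix.head_cons]
      exact analyticAt_id.sub ((analyticAt_rcos x).mul (analyticAt_rsin x))

private lemma aeval_eq_eval1 (g : Fin 1 → ℝ) (q : MvPolynomial (Fin 1) ℝ) :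
    MvPolynomial.aeval g q = MvPolynomial.eval g q := by
  rw [MvPolynomial.aeval_def]
  rfl

private lemma eval_aeval1 (c : ℝ) (q : MvPolynomial (Fin 1) ℝ) :
    Polynomial.eval c (MvPolynomial.aeval (fun _ : Fin 1 => Polynomial.X) q)
      = MvPolynomial.eval ![c] q := by
  rw [← Polynomial.coe_aeval_eq_eval, MvPolynomial.comp_aeval_apply, ← aeval_eq_eval1]
  simp only [Polynomial.aeval_X]
  have hfun : (fun _ : Fin 1 => c) = ![c] := by funext j; fin_cases j; rfl
  rw [hfun]

/-- Newton's Lemma XXVIII for the disk: the circular-segment area function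
`A(d) = arccos d − d √(1 − d²)` is not algebraic on `(-1, 1)`. -/
theorem stmt_5 :
    ¬ ∃ P : MvPolynomial (Fin 2) ℝ, P ≠ 0 ∧
      ∀ d ∈ Set.Ioo (-1 : ℝ) 1,
        MvPolynomial.eval ![d, Real.arccos d - d * Real.sqrt (1 - d ^ 2)] P = 0 := by
  rintro ⟨P, hP, hroot⟩
  apply hP
  -- Step 1: the identity holds on (0, π) after substituting d = cos θ,
  -- and then on all of ℝ by analyticity.
  have hF : ∀ θ : ℝ,
      MvPolynomial.eval ![Real.cos θ, θ - Real.cos θ * Real.sin θ] P = 0 := by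
    have h0 : ∀ θ ∈ Set.Ioo (0 : ℝ) Real.pi,
        MvPolynomial.eval ![Real.cos θ, θ - Real.cos θ * Real.sin θ] P = 0 := by
      intro θ hθ
      have hθ0 : (0:ℝ) ≤ θ := hθ.1.le
      have hθπ : θ ≤ Real.pi := hθ.2.le
      have hmemθ : θ ∈ Set.Icc (0:ℝ) Real.pi := ⟨hθ0, hθπ⟩
      have hc : Real.cos θ ∈ Set.Ioo (-1 : ℝ) 1 := by
        constructor
        · have := Real.strictAntiOn_cos hmemθ
            ⟨Real.pi_pos.le, le_refl _⟩ hθ.2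
          simpa [Real.cos_pi] using this
        · have := Real.strictAntiOn_cos ⟨le_refl _, Real.pi_pos.le⟩ hmemθ hθ.1
          simpa [Real.cos_zero] using this
      have h := hroot _ hc
      rwa [Real.arccos_cos hθ0 hθπ, ← Real.sin_eq_sqrt_one_sub_cos_sq hθ0 hθπ] at h
    have hmem : (Real.pi / 2 : ℝ) ∈ Set.Ioo (0 : ℝ) Real.pi :=
      ⟨by positivity, by linarith [Real.pi_pos]⟩
    have hev : ∀ᶠ z in nhds (Real.pi / 2 : ℝ),
        MvPolynomial.eval ![Real.cos z, z - Real.cos z * Real.sin z] P = 0 := by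
      filter_upwards [isOpen_Ioo.mem_nhds hmem] with z hz using h0 z hz
    have heq := (analytic_aux P).eqOn_zero_of_preconnected_of_frequently_eq_zero
      isPreconnected_univ (Set.mem_univ (Real.pi / 2))
      ((hev.filter_mono nhdsWithin_le_nhds).frequently)
    intro θ
    exact heq (Set.mem_univ θ)
  -- Step 2: rewrite P as a one-variable polynomial in the second coordinate.
  set Q := MvPolynomial.finSuccEquiv ℝ 1 (MvPolynomial.rename (Equiv.swap 0 1) P) with hQdef
  have key : ∀ c y : ℝ,
      Polynomial.eval y (Q.map (MvPolynomial.eval ![c])) = MvPolynomial.eval ![c, y] P := by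
    intro c y
    have hswap : (Fin.cons y ![c] : Fin 2 → ℝ) ∘ (Equiv.swap 0 1) = ![c, y] := by
      funext i; fin_cases i <;> simp
    rw [hQdef, ← MvPolynomial.eval_eq_eval_mv_eval', MvPolynomial.eval_rename, hswap]
  -- Step 3: for each x, the specialization of Q at cos x has infinitely many roots.
  have hQx : ∀ x : ℝ, Q.map (MvPolynomial.eval ![Real.cos x]) = 0 := by
    intro x
    apply Polynomial.eq_zero_of_infinite_isRoot
    apply Set.infinite_of_injective_forall_mem
      (f := fun k : ℕ => (x - Real.cos x * Real.sin x) + (k : ℝ) * (2 * Real.pi)) ?_ ?_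
    · have hmono : StrictMono
          (fun k : ℕ => (x - Real.cos x * Real.sin x) + (k : ℝ) * (2 * Real.pi)) := by
        intro a b hab
        have h1 : (a : ℝ) < b := by exact_mod_cast hab
        have := Real.pi_pos
        dsimp only
        nlinarith
      exact hmono.injective
    · intro k
      show Polynomial.IsRoot _ _
      unfold Polynomial.IsRoot
      rw [key]
      have h := hF (x + (k : ℤ) * (2 * Real.pi))
      rw [Real.cos_add_int_mul_two_pi x k, Real.sin_add_int_mul_two_pi x k] at h
      have h2 : (x - Real.cos x * Real.sin x) + (k : ℝ) * (2 * Real.pi)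
          = x + ((k : ℤ) : ℝ) * (2 * Real.pi) - Real.cos x * Real.sin x := by
        push_cast; ring
      beta_reduce
      rw [h2]
      exact h
  -- Step 4: all coefficients of Q vanish, hence Q = 0, hence P = 0.
  have hcoeff : ∀ i : ℕ, Q.coeff i = 0 := by
    intro i
    have hx : ∀ c ∈ Set.Icc (-1 : ℝ) 1,
        Polynomial.eval c (MvPolynomial.aeval (fun _ : Fin 1 => (Polynomial.X : Polynomial ℝ)) (Q.coeff i)) = 0 := by
      intro c hc
      have h := congrArg (fun p => Polynomial.coeff p i) (hQx (Real.arccos c))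
      simp only [Polynomial.coeff_map, Polynomial.coeff_zero] at h
      rw [Real.cos_arccos hc.1 hc.2] at h
      rw [eval_aeval1]
      exact h
    have hr0 : MvPolynomial.aeval (fun _ : Fin 1 => (Polynomial.X : Polynomial ℝ)) (Q.coeff i) = 0 := by
      apply Polynomial.eq_zero_of_infinite_isRoot
      apply Set.Infinite.mono (s := Set.Icc (-1 : ℝ) 1)
      · intro c hc
        exact hx c hc
      · exact Set.Icc_infinite (by norm_num)
    apply MvPolynomial.funext
    intro v
    have hv : v = ![v 0] := by funext j; fin_cases j; rfl
    rw [map_zero, hv, ← eval_aeval1, hr0, Polynomial.eval_zero]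
  have hQ0 : Q = 0 := Polynomial.ext fun i => by rw [hcoeff i, Polynomial.coeff_zero]
  have hren : MvPolynomial.rename (Equiv.swap 0 1) P = 0 := by
    have h := congrArg (MvPolynomial.finSuccEquiv ℝ 1).symm hQ0
    rw [hQdef] at h
    simpa using h
  have := MvPolynomial.rename_injective (R := ℝ) _ (Equiv.swap (0 : Fin 2) 1).injective
  have := this (by rw [hren, map_zero] : MvPolynomial.rename (Equiv.swap 0 1) P
    = MvPolynomial.rename (Equiv.swap 0 1) 0)
  exact this
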